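/- For all nonnegative integers m and n, the fully degenerate Bell numbers satisfy the Spivey-type recurrence Bel_{n+m,λ} = Σ_{l=0}^n Σ_{k=0}^m (1)_{k,λ} {m brace k}_λ C(n,l) Bel_{l,λ} F_{n−l,λ}^{(k)}(−λ, k−mλ). -/

import Mathlib

open PowerSeries

/-- The degenerate falling factorial `(x)_{n,λ}`. -/
def degFall (lam x : ℝ) (n : ℕ) : ℝ := ∏ i ∈ Finset.range n, (x - i * lam)

/-- The ordinary falling factorial `(x)_k`. -/
def fallF (x : ℝ) (k : ℕ) : ℝ := ∏ i ∈ Finset.range k, (x - i)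

/-- The degenerate exponential `e_λ^y(t) = Σ_{m≥0} (y)_{m,λ} t^m/m!`. -/
noncomputable def degExpP (lam y : ℝ) : PowerSeries ℝ :=
  PowerSeries.mk fun m => degFall lam y m / (Nat.factorial m)

/-- The two-variable degenerate Fubini polynomials of order `k ∈ ℕ`, defined by
`(1/(1 − x(e_λ(t) − 1)))^k e_λ^y(t) = Σ_j F_{j,λ}^{(k)}(x,y) t^j/j!`. -/
noncomputable def degFubiniOrd (lam : ℝ) (k : ℕ) (x y : ℝ) (j : ℕ) : ℝ :=
  (Nat.factorial j : ℝ) * PowerSeries.coeff j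
    (((1 - PowerSeries.C x * (degExpP lam 1 - 1))⁻¹) ^ k * degExpP lam y)


open Finset

section Aux
variable (lam : ℝ)



lemma degFall_zero (x : ℝ) : degFall lam x 0 = 1 := by simp [degFall]

lemma degFall_succ (x : ℝ) (n : ℕ) :
    degFall lam x (n+1) = degFall lam x n * (x - n * lam) := by
  simp [degFall, Finset.prod_range_succ]

lemma degFall_succ' (x : ℝ) (n : ℕ) :
    degFall lam x (n+1) = x * degFall lam (x - lam) n := by
  rw [degFall, Finset.prod_range_succ']
  have h : ∀ i ∈ Finset.range n, (x - (↑(i+1):ℝ) * lam) = ((x - lam) - i * lam) := by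
    intro i _; push_cast; ring
  rw [Finset.prod_congr rfl h]
  simp [degFall, mul_comm]

/-- degenerate Vandermonde -/
lemma degFall_add (a b : ℝ) (n : ℕ) :
    degFall lam (a+b) n
      = ∑ p ∈ Finset.range (n+1), (n.choose p : ℝ) * degFall lam a p * degFall lam b (n - p) := by
  induction n with
  | zero => simp [degFall]
  | succ n ih =>
    rw [degFall_succ, ih, Finset.sum_mul]
    have key : ∀ p ∈ Finset.range (n+1),
        (n.choose p : ℝ) * degFall lam a p * degFall lam b (n-p) * (a + b - n*lam)
        = ((n.choose p : ℝ) * degFall lam a (p+1) * degFall lam b (n-p))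
          + ((n.choose p : ℝ) * degFall lam a p * degFall lam b (n-p+1)) := by
      intro p hp
      rw [Finset.mem_range] at hp
      rw [degFall_succ, degFall_succ, Nat.cast_sub (Nat.lt_succ_iff.mp hp)]
      ring
    rw [Finset.sum_congr rfl key, Finset.sum_add_distrib]
    -- RHS decomposition
    rw [Finset.sum_range_succ' (fun p => ((n+1).choose p : ℝ) * degFall lam a p * degFall lam b (n+1-p))]
    have hsplit : ∀ p ∈ Finset.range (n+1),
        (((n+1).choose (p+1) : ℝ)) * degFall lam a (p+1) * degFall lam b (n+1-(p+1))
        = ((n.choose p : ℝ) * degFall lam a (p+1) * degFall lam b (n-p))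
          + ((n.choose (p+1) : ℝ) * degFall lam a (p+1) * degFall lam b (n-p)) := by
      intro p hp
      have : (n+1).choose (p+1) = n.choose p + n.choose (p+1) := Nat.choose_succ_succ n p
      rw [this]
      have hnp : n+1-(p+1) = n-p := by omega
      rw [hnp]; push_cast; ring
    rw [Finset.sum_congr rfl hsplit, Finset.sum_add_distrib]
    have h2 : (∑ p ∈ Finset.range (n+1), (n.choose (p+1) : ℝ) * degFall lam a (p+1) * degFall lam b (n-p))
        + ((n+1).choose 0 : ℝ) * degFall lam a 0 * degFall lam b (n+1-0)
        = ∑ p ∈ Finset.range (n+1), (n.choose p : ℝ) * degFall lam a p * degFall lam b (n-p+1) := by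
      have e1 : ∀ p ∈ Finset.range (n+1),
          (n.choose (p+1) : ℝ) * degFall lam a (p+1) * degFall lam b (n-p)
          = (n.choose (p+1) : ℝ) * degFall lam a (p+1) * degFall lam b (n+1-(p+1)) := by
        intro p hp; rw [Finset.mem_range] at hp
        congr 2; omega
      rw [Finset.sum_congr rfl e1]
      have e0 : (((n+1).choose 0 : ℕ) : ℝ) = ((n.choose 0 : ℕ) : ℝ) := by simp
      rw [e0]
      rw [← Finset.sum_range_succ' (fun p => (n.choose p : ℝ) * degFall lam a p * degFall lam b (n+1-p))]
      rw [Finset.sum_range_succ]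
      simp only [Nat.choose_succ_self, Nat.cast_zero, zero_mul, add_zero]
      apply Finset.sum_congr rfl
      intro p hp; rw [Finset.mem_range] at hp
      congr 2; omega
    rw [add_assoc, h2]


lemma coeff_degExpP (y : ℝ) (n : ℕ) :
    coeff n (degExpP lam y) = degFall lam y n / n.factorial := by
  simp [degExpP]

lemma constantCoeff_degExpP (y : ℝ) : constantCoeff (degExpP lam y) = 1 := by
  rw [← coeff_zero_eq_constantCoeff, coeff_degExpP]
  simp [degFall]

lemma degExpP_zero : degExpP lam 0 = 1 := by
  ext n
  rw [coeff_degExpP, coeff_one]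
  cases n with
  | zero => simp [degFall]
  | succ n =>
    rw [degFall_succ']
    simp

lemma degExpP_mul (a b : ℝ) : degExpP lam a * degExpP lam b = degExpP lam (a+b) := by
  ext n
  rw [coeff_mul, coeff_degExpP, degFall_add, Finset.Nat.sum_antidiagonal_eq_sum_range_succ_mk,
    Finset.sum_div]
  apply Finset.sum_congr rfl
  intro p hp
  rw [Finset.mem_range, Nat.lt_succ_iff] at hp
  dsimp only
  rw [coeff_degExpP, coeff_degExpP]
  have hc : ((n.choose p : ℕ) : ℝ) * (p.factorial : ℝ) * ((n-p).factorial : ℝ) = (n.factorial : ℝ) := by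
    rw [← Nat.cast_mul, ← Nat.cast_mul, Nat.choose_mul_factorial_mul_factorial hp]
  have h1 : ((p.factorial : ℕ) : ℝ) ≠ 0 := by positivity
  have h2 : (((n-p).factorial : ℕ) : ℝ) ≠ 0 := by positivity
  have h3 : ((n.factorial : ℕ) : ℝ) ≠ 0 := by positivity
  rw [div_mul_div_comm, div_eq_div_iff (by positivity) h3]
  linear_combination (- degFall lam a p * degFall lam b (n-p)) * hc

lemma derivative_degExpP (a : ℝ) :
    d⁄dX ℝ (degExpP lam a) = C a * degExpP lam (a - lam) := by
  ext n
  rw [coeff_derivative, coeff_degExpP, coeff_C_mul, coeff_degExpP, degFall_succ']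
  rw [Nat.factorial_succ]
  push_cast
  have h1 : (n.factorial : ℝ) ≠ 0 := by positivity
  field_simp

lemma one_add_X_mul_degExpP (a : ℝ) :
    (1 + C lam * X) * degExpP lam (a - lam) = degExpP lam a := by
  ext n
  rw [add_mul, one_mul, map_add, mul_assoc, coeff_C_mul]
  cases n with
  | zero =>
    rw [coeff_zero_X_mul]
    simp [coeff_degExpP, degFall]
  | succ n =>
    rw [coeff_succ_X_mul, coeff_degExpP, coeff_degExpP, coeff_degExpP]
    have hstep : degFall lam (a - lam) (n+1) = degFall lam (a-lam) n * (a - lam - n * lam) :=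
      degFall_succ lam _ n
    have hstep2 : degFall lam a (n+1) = a * degFall lam (a - lam) n := degFall_succ' lam a n
    rw [hstep, hstep2, Nat.factorial_succ]
    have h1 : (n.factorial : ℝ) ≠ 0 := by positivity
    have h2 : ((n:ℝ) + 1) ≠ 0 := by positivity
    push_cast
    field_simp
    ring


noncomputable def gS (lam : ℝ) : PowerSeries ℝ := degExpP lam 1 - 1
noncomputable def US (lam : ℝ) : PowerSeries ℝ := 1 - C (-lam) * (degExpP lam 1 - 1)

lemma US_eq : US lam = 1 + C lam * gS lam := by
  rw [US, gS, map_neg]; ring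

lemma constantCoeff_gS : constantCoeff (gS lam) = 0 := by
  simp [gS, constantCoeff_degExpP]

lemma coeff_gS_pow (k n : ℕ) (h : n < k) : coeff n ((gS lam)^k) = 0 := by
  induction k generalizing n with
  | zero => omega
  | succ k ih =>
    rw [pow_succ, mul_comm, coeff_mul]
    apply Finset.sum_eq_zero
    intro p hp
    rw [Finset.HasAntidiagonal.mem_antidiagonal] at hp
    rcases Nat.eq_zero_or_pos p.1 with h0 | h0
    · rw [h0, coeff_zero_eq_constantCoeff_apply, constantCoeff_gS, zero_mul]
    · rw [ih p.2 (by omega), mul_zero]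

lemma constantCoeff_US : constantCoeff (US lam) = 1 := by
  simp [US, constantCoeff_degExpP]

lemma US_mul_inv : US lam * (US lam)⁻¹ = 1 :=
  PowerSeries.mul_inv_cancel _ (by rw [constantCoeff_US]; norm_num)

lemma derivative_gS : d⁄dX ℝ (gS lam) = degExpP lam (1 - lam) := by
  rw [gS, map_sub, derivative_degExpP]
  simp

lemma derivative_US : d⁄dX ℝ (US lam) = C lam * degExpP lam (1 - lam) := by
  rw [US_eq, map_add, Derivation.map_one_eq_zero, Derivation.leibniz, derivative_gS, derivative_C]
  simp [smul_eq_mul]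

noncomputable def Pser (lam : ℝ) (N : ℕ) : PowerSeries ℝ :=
  ∑ k ∈ Finset.range (N+1), C (degFall lam 1 k / k.factorial) * (gS lam)^k

lemma dPser_mul_US (N : ℕ) :
    d⁄dX ℝ (Pser lam N) * US lam
      = Pser lam N * degExpP lam (1 - lam)
        - C (degFall lam 1 (N+1) / N.factorial) * ((gS lam)^N * degExpP lam (1 - lam)) := by
  induction N with
  | zero =>
    have h0 : Pser lam 0 = 1 := by
      simp [Pser, degFall_zero]
    rw [h0, Derivation.map_one_eq_zero]
    have h1 : degFall lam 1 1 = 1 := by simp [degFall]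
    have h0f : (Nat.factorial 0 : ℝ) = 1 := by norm_num
    rw [h1]
    norm_num
  | succ N ih =>
    have hP : Pser lam (N+1) = Pser lam N + C (degFall lam 1 (N+1) / (N+1).factorial) * (gS lam)^(N+1) := by
      rw [Pser, Finset.sum_range_succ]; rfl
    rw [hP, map_add, Derivation.leibniz, Derivation.leibniz_pow, derivative_gS, derivative_C]
    rw [add_mul, ih, US_eq lam]
    simp only [smul_eq_mul, nsmul_eq_mul, smul_zero, mul_zero, add_zero, zero_mul,
      Nat.add_sub_cancel, Nat.cast_add, Nat.cast_one]
    have e1 : degFall lam 1 (N+1) / N.factorial = ((N:ℝ)+1) * (degFall lam 1 (N+1) / (N+1).factorial) := by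
      rw [Nat.factorial_succ]
      have : (N.factorial : ℝ) ≠ 0 := by positivity
      push_cast
      field_simp
    have e2 : degFall lam 1 (N+1+1) / (N+1).factorial
        = degFall lam 1 (N+1)/(N+1).factorial - lam*(((N:ℝ)+1)*(degFall lam 1 (N+1)/(N+1).factorial)) := by
      rw [degFall_succ]
      have : ((N+1).factorial : ℝ) ≠ 0 := by positivity
      push_cast
      field_simp
    rw [e1, e2]
    simp only [map_sub, map_mul, map_add, map_natCast, map_one]
    push_cast
    ring


noncomputable def Tc (lam : ℝ) (m k : ℕ) : ℝ :=
  (m.factorial : ℝ) * coeff m ((gS lam)^k) / k.factorial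
noncomputable def BelT (lam : ℝ) (m : ℕ) : ℝ :=
  ∑ j ∈ Finset.range (m+1), Tc lam m j * degFall lam 1 j
noncomputable def Bser (lam : ℝ) : PowerSeries ℝ :=
  PowerSeries.mk fun n => BelT lam n / n.factorial

lemma coeff_Bser (i : ℕ) : coeff i (Bser lam)
    = ∑ j ∈ Finset.range (i+1), (degFall lam 1 j / j.factorial) * coeff i ((gS lam)^j) := by
  rw [Bser, coeff_mk, BelT, Finset.sum_div]
  apply Finset.sum_congr rfl
  intro j _
  rw [Tc]
  have h1 : (i.factorial : ℝ) ≠ 0 := by positivity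
  have h2 : (j.factorial : ℝ) ≠ 0 := by positivity
  field_simp

lemma coeff_Bser_eq_Pser (i N : ℕ) (h : i ≤ N) :
    coeff i (Bser lam) = coeff i (Pser lam N) := by
  rw [coeff_Bser, Pser, map_sum]
  have hterm : ∀ j ∈ Finset.range (N+1),
      coeff i (C (degFall lam 1 j / j.factorial) * (gS lam)^j)
      = (degFall lam 1 j / j.factorial) * coeff i ((gS lam)^j) := by
    intro j _; rw [coeff_C_mul]
  rw [Finset.sum_congr rfl hterm]
  apply Finset.sum_subset
  · exact Finset.range_subset_range.2 (by omega)
  · intro j hj hnj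
    rw [Finset.mem_range] at hj hnj
    rw [coeff_gS_pow lam j i (by omega), mul_zero]

lemma coeff_mul_congr (f f' h : PowerSeries ℝ) (n : ℕ)
    (H : ∀ i ≤ n, coeff i f = coeff i f') :
    coeff n (f * h) = coeff n (f' * h) := by
  rw [coeff_mul, coeff_mul]
  apply Finset.sum_congr rfl
  intro p hp
  rw [Finset.HasAntidiagonal.mem_antidiagonal] at hp
  rw [H p.1 (by omega)]

lemma dBser_mul_US :
    d⁄dX ℝ (Bser lam) * US lam = Bser lam * degExpP lam (1 - lam) := by
  ext n
  have hag : ∀ i ≤ n+1, coeff i (Bser lam) = coeff i (Pser lam (n+1)) :=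
    fun i hi => coeff_Bser_eq_Pser lam i (n+1) hi
  have hd : ∀ i ≤ n, coeff i (d⁄dX ℝ (Bser lam)) = coeff i (d⁄dX ℝ (Pser lam (n+1))) := by
    intro i hi
    rw [coeff_derivative, coeff_derivative, hag (i+1) (by omega)]
  rw [coeff_mul_congr _ _ _ _ hd, dPser_mul_US, map_sub,
    coeff_mul_congr _ _ _ _ (fun i hi => (hag i (by omega)))]
  have hz : coeff n (C (degFall lam 1 (n+1+1) / (n+1).factorial)
      * ((gS lam)^(n+1) * degExpP lam (1 - lam))) = 0 := by
    rw [coeff_C_mul, coeff_mul]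
    have : ∀ p ∈ Finset.HasAntidiagonal.antidiagonal n,
        coeff p.1 ((gS lam)^(n+1)) * coeff p.2 (degExpP lam (1-lam)) = 0 := by
      intro p hp
      rw [Finset.HasAntidiagonal.mem_antidiagonal] at hp
      rw [coeff_gS_pow lam (n+1) p.1 (by omega), zero_mul]
    rw [Finset.sum_congr rfl this]
    simp
  rw [hz, sub_zero]

lemma derivative_Bser :
    d⁄dX ℝ (Bser lam) = Bser lam * degExpP lam (1 - lam) * (US lam)⁻¹ := by
  have h := dBser_mul_US lam
  calc d⁄dX ℝ (Bser lam) = d⁄dX ℝ (Bser lam) * (US lam * (US lam)⁻¹) := by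
        rw [US_mul_inv, mul_one]
    _ = (d⁄dX ℝ (Bser lam) * US lam) * (US lam)⁻¹ := by ring
    _ = Bser lam * degExpP lam (1 - lam) * (US lam)⁻¹ := by rw [h]


lemma fallF_nat (M k : ℕ) : fallF (M:ℝ) k = (M.descFactorial k : ℝ) := by
  induction k with
  | zero => simp [fallF]
  | succ k ih =>
    rw [fallF, Finset.prod_range_succ, ← fallF, ih, Nat.descFactorial_succ]
    rcases Nat.lt_or_ge M k with h | h
    · rw [Nat.descFactorial_eq_zero_iff_lt.2 h]
      push_cast
      simp [Nat.sub_eq_zero_of_le (le_of_lt h)]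
    · push_cast [Nat.cast_sub h]
      ring

lemma fallF_nat' (M k : ℕ) : fallF (M:ℝ) k = (k.factorial : ℝ) * (M.choose k : ℝ) := by
  rw [fallF_nat, Nat.descFactorial_eq_factorial_mul_choose]
  push_cast; ring

lemma degExpP_natpow (M : ℕ) : degExpP lam (M:ℝ) = (degExpP lam 1)^M := by
  induction M with
  | zero => simpa using degExpP_zero lam
  | succ M ih =>
    rw [pow_succ, ← ih, degExpP_mul]
    norm_num

lemma degFall_nat_eq (M n : ℕ) (h : M ≤ n) :
    degFall lam (M:ℝ) n
      = (n.factorial : ℝ) * ∑ k ∈ Finset.range (n+1), (M.choose k : ℝ) * coeff n ((gS lam)^k) := by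
  have h1 : degFall lam (M:ℝ) n = (n.factorial : ℝ) * coeff n (degExpP lam (M:ℝ)) := by
    rw [coeff_degExpP]
    have : (n.factorial : ℝ) ≠ 0 := by positivity
    field_simp
  rw [h1, degExpP_natpow]
  congr 1
  have h2 : degExpP lam 1 = gS lam + 1 := by rw [gS]; ring
  rw [h2, add_pow]
  rw [map_sum]
  have h3 : ∀ k ∈ Finset.range (M+1),
      coeff n ((gS lam)^k * 1^(M-k) * ((M.choose k : ℕ) : ℝ⟦X⟧))
      = (M.choose k : ℝ) * coeff n ((gS lam)^k) := by
    intro k _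
    rw [one_pow, mul_one,
      show ((M.choose k : ℕ) : ℝ⟦X⟧) = C ((M.choose k : ℕ) : ℝ) from (map_natCast (C (R := ℝ)) _).symm,
      mul_comm, coeff_C_mul]
  rw [Finset.sum_congr rfl h3]
  apply Finset.sum_subset (Finset.range_subset_range.2 (by omega))
  intro j hj hnj
  rw [Finset.mem_range] at hj hnj
  rw [Nat.choose_eq_zero_of_lt (by omega), Nat.cast_zero, zero_mul]

lemma tri_choose (b : ℕ → ℝ) (n : ℕ)
    (H : ∀ M ≤ n, ∑ k ∈ Finset.range (n+1), (M.choose k : ℝ) * b k = 0) :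
    ∀ k ≤ n, b k = 0 := by
  intro k
  induction k using Nat.strong_induction_on with
  | _ k ih =>
    intro hk
    have h := H k hk
    rw [← Finset.sum_subset (Finset.range_subset_range.2 (show k+1 ≤ n+1 by omega))
      (fun j hj hnj => by
        rw [Finset.mem_range] at hj hnj
        rw [Nat.choose_eq_zero_of_lt (by omega), Nat.cast_zero, zero_mul])] at h
    rw [Finset.sum_range_succ, Nat.choose_self] at h
    have hz : ∀ j ∈ Finset.range k, (k.choose j : ℝ) * b j = 0 := by
      intro j hj
      rw [Finset.mem_range] at hj
      rw [ih j hj (by omega), mul_zero]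
    rw [Finset.sum_congr rfl hz, Finset.sum_const_zero, zero_add, Nat.cast_one, one_mul] at h
    exact h

lemma stirling_eq (S : ℕ → ℕ → ℝ)
    (hS : ∀ (n : ℕ) (z : ℝ), degFall lam z n = ∑ k ∈ Finset.range (n+1), S n k * fallF z k)
    (n k : ℕ) (hk : k ≤ n) : S n k = Tc lam n k := by
  set b : ℕ → ℝ :=
    fun j => S n j * j.factorial - (n.factorial : ℝ) * coeff n ((gS lam)^j) with hb
  have hH : ∀ M ≤ n, ∑ j ∈ Finset.range (n+1), (M.choose j : ℝ) * b j = 0 := by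
    intro M hM
    have h1 := hS n (M:ℝ)
    rw [degFall_nat_eq lam M n hM, Finset.mul_sum] at h1
    have h2 : ∀ j ∈ Finset.range (n+1),
        S n j * fallF (M:ℝ) j = (M.choose j : ℝ) * (S n j * j.factorial) := by
      intro j _; rw [fallF_nat']; ring
    rw [Finset.sum_congr rfl h2] at h1
    have h3 : ∀ j ∈ Finset.range (n+1), (M.choose j : ℝ) * b j
        = (M.choose j : ℝ) * (S n j * j.factorial)
          - (n.factorial : ℝ) * ((M.choose j : ℝ) * coeff n ((gS lam)^j)) := by
      intro j _; rw [hb]; ring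
    rw [Finset.sum_congr rfl h3, Finset.sum_sub_distrib, sub_eq_zero, ← h1]
  have hb0 := tri_choose b n hH k hk
  rw [hb] at hb0
  have hkf : (k.factorial : ℝ) ≠ 0 := by positivity
  rw [Tc]
  have hb1 : S n k * (k.factorial:ℝ) - (n.factorial:ℝ) * coeff n ((gS lam)^k) = 0 := hb0
  field_simp
  linarith [hb1]

lemma Tc_big (m k : ℕ) (h : m < k) : Tc lam m k = 0 := by
  rw [Tc, coeff_gS_pow lam k m h]
  simp

lemma Tc_zero_succ (m : ℕ) : Tc lam (m+1) 0 = 0 := by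
  rw [Tc, pow_zero, coeff_one]
  simp

lemma Tc_diag : Tc lam 0 0 = 1 := by
  rw [Tc, pow_zero, coeff_one]
  simp


lemma coeff_X_mul_d (F : PowerSeries ℝ) (m : ℕ) :
    coeff m (X * d⁄dX ℝ F) = (m:ℝ) * coeff m F := by
  cases m with
  | zero => rw [coeff_zero_X_mul]; simp
  | succ m => rw [coeff_succ_X_mul, coeff_derivative]; push_cast; ring

lemma key_num (k m : ℕ) :
    ((m:ℝ)+1) * coeff (m+1) ((gS lam)^(k+1)) + lam * m * coeff m ((gS lam)^(k+1))
      = ((k:ℝ)+1) * (coeff m ((gS lam)^k) + coeff m ((gS lam)^(k+1))) := by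
  have hs : (1 + C lam * X) * d⁄dX ℝ ((gS lam)^(k+1))
      = C ((k:ℝ)+1) * ((gS lam)^k + (gS lam)^(k+1)) := by
    rw [Derivation.leibniz_pow, derivative_gS, Nat.add_sub_cancel]
    have h := one_add_X_mul_degExpP lam 1
    have h2 : degExpP lam 1 = 1 + gS lam := by rw [gS]; ring
    rw [h2] at h
    simp only [smul_eq_mul, nsmul_eq_mul, map_add, map_natCast, map_one]
    push_cast
    linear_combination ((k:ℝ⟦X⟧)+1) * (gS lam)^k * h
  have hc := congrArg (coeff m) hs
  rw [add_mul, one_mul, map_add, mul_assoc, coeff_C_mul, coeff_X_mul_d,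
    coeff_derivative, coeff_C_mul, map_add] at hc
  push_cast at hc ⊢
  linarith [hc]

lemma Tc_rec (m k : ℕ) :
    Tc lam (m+1) (k+1) = Tc lam m k + (((k:ℝ)+1) - m*lam) * Tc lam m (k+1) := by
  have h := key_num lam k m
  have f1 : (((m+1).factorial : ℕ):ℝ) = ((m:ℝ)+1) * (m.factorial:ℝ) := by
    rw [Nat.factorial_succ]; push_cast; ring
  have f2 : (((k+1).factorial : ℕ):ℝ) = ((k:ℝ)+1) * (k.factorial:ℝ) := by
    rw [Nat.factorial_succ]; push_cast; ring
  have hk1 : ((k+1).factorial:ℝ) ≠ 0 := by positivity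
  have hk0 : ((k).factorial:ℝ) ≠ 0 := by positivity
  rw [Tc, Tc, Tc, f1, f2]
  field_simp
  linear_combination h


lemma derivative_USinv :
    d⁄dX ℝ (US lam)⁻¹ = -((US lam)⁻¹)^2 * (C lam * degExpP lam (1 - lam)) := by
  rw [derivative_inv', derivative_US]

lemma dTerm (k : ℕ) (y : ℝ) :
    d⁄dX ℝ (Bser lam * ((US lam)⁻¹)^k * degExpP lam y)
      = C (1 - (k:ℝ)*lam) * (Bser lam * ((US lam)⁻¹)^(k+1) * degExpP lam (y + 1 - lam))
        + C y * (Bser lam * ((US lam)⁻¹)^k * degExpP lam (y - lam)) := by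
  have hE : degExpP lam (1-lam) * degExpP lam y = degExpP lam (y+1-lam) := by
    rw [degExpP_mul]; congr 1; ring
  rw [Derivation.leibniz, Derivation.leibniz, Derivation.leibniz_pow,
      derivative_USinv, derivative_degExpP, derivative_Bser]
  simp only [smul_eq_mul, nsmul_eq_mul, map_sub, map_one, map_mul, map_natCast]
  cases k with
  | zero =>
    simp only [pow_zero, Nat.cast_zero, zero_mul, mul_zero, mul_one, add_zero, zero_add,
      pow_one, sub_zero]
    linear_combination Bser lam * (US lam)⁻¹ * hE
  | succ k =>
    simp only [Nat.add_sub_cancel]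
    push_cast
    linear_combination (Bser lam * ((US lam)⁻¹)^(k+2) * (1 - ((k:ℝ⟦X⟧)+1) * C lam)) * hE


noncomputable def Fterm (lam : ℝ) (m k : ℕ) : PowerSeries ℝ :=
  Bser lam * ((US lam)⁻¹)^k * degExpP lam ((k:ℝ) - m*lam)

noncomputable def RHSser (lam : ℝ) (m : ℕ) : PowerSeries ℝ :=
  ∑ k ∈ Finset.range (m+1), C (degFall lam 1 k * Tc lam m k) * Fterm lam m k

lemma shiftB (m : ℕ) :
    d⁄dX ℝ (PowerSeries.mk fun n => BelT lam (n+m) / n.factorial)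
      = PowerSeries.mk fun n => BelT lam (n+m+1) / n.factorial := by
  ext n
  rw [coeff_derivative, coeff_mk, coeff_mk]
  have h3 : n+1+m = n+m+1 := by omega
  rw [h3, Nat.factorial_succ]
  have h1 : (n.factorial:ℝ) ≠ 0 := by positivity
  push_cast
  field_simp

lemma Bfun_zero_coeff (m : ℕ) : (((0:ℕ):ℝ) - m*lam) * Tc lam m 0 = 0 := by
  cases m with
  | zero => rw [Tc_diag]; norm_num
  | succ m => rw [Tc_zero_succ]; ring

lemma mainInd (m : ℕ) :
    (PowerSeries.mk fun n => BelT lam (n+m) / n.factorial) = RHSser lam m := by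
  induction m with
  | zero =>
    have hB : (PowerSeries.mk fun n => BelT lam (n+0) / n.factorial) = Bser lam := by
      ext n; rw [coeff_mk, Bser, coeff_mk]; norm_num
    rw [hB, RHSser, Finset.sum_range_one, Fterm, degFall_zero, Tc_diag, pow_zero]
    have h0 : ((0:ℕ):ℝ) - ((0:ℕ):ℝ)*lam = 0 := by norm_num
    rw [h0, degExpP_zero]
    simp
  | succ m ih =>
    have hsh : (PowerSeries.mk fun n => BelT lam (n+(m+1)) / n.factorial)
        = d⁄dX ℝ (PowerSeries.mk fun n => BelT lam (n+m) / n.factorial) := by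
      rw [shiftB]; rfl
    rw [hsh, ih, RHSser, map_sum]
    have hterm : ∀ k ∈ Finset.range (m+1),
        d⁄dX ℝ (C (degFall lam 1 k * Tc lam m k) * Fterm lam m k)
        = C (degFall lam 1 (k+1) * Tc lam m k) * Fterm lam (m+1) (k+1)
          + C (degFall lam 1 k * ((k:ℝ) - m*lam) * Tc lam m k) * Fterm lam (m+1) k := by
      intro k _
      rw [Fterm, Derivation.leibniz, derivative_C, smul_zero, add_zero, smul_eq_mul,
        dTerm lam k ((k:ℝ) - m*lam)]
      have e1 : ((k:ℝ) - m*lam) + 1 - lam = (((k+1:ℕ)):ℝ) - ((m+1:ℕ):ℝ)*lam := by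
        push_cast; ring
      have e2 : ((k:ℝ) - m*lam) - lam = ((k:ℕ):ℝ) - ((m+1:ℕ):ℝ)*lam := by
        push_cast; ring
      rw [e1, e2, Fterm, Fterm, degFall_succ]
      simp only [map_mul, map_sub, map_one, map_natCast]
      push_cast
      ring
    rw [Finset.sum_congr rfl hterm, Finset.sum_add_distrib]
    -- target : RHSser (m+1)
    rw [RHSser]
    rw [Finset.sum_range_succ' (fun k => C (degFall lam 1 k * Tc lam (m+1) k) * Fterm lam (m+1) k)]
    have hF0 : C (degFall lam 1 0 * Tc lam (m+1) 0) * Fterm lam (m+1) 0 = 0 := by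
      rw [Tc_zero_succ, mul_zero, map_zero, zero_mul]
    rw [hF0, add_zero]
    have hsplit : ∀ k ∈ Finset.range (m+1),
        C (degFall lam 1 (k+1) * Tc lam (m+1) (k+1)) * Fterm lam (m+1) (k+1)
        = C (degFall lam 1 (k+1) * Tc lam m k) * Fterm lam (m+1) (k+1)
          + C (degFall lam 1 (k+1) * (((k+1:ℕ):ℝ) - m*lam) * Tc lam m (k+1)) * Fterm lam (m+1) (k+1) := by
      intro k _
      rw [Tc_rec]
      push_cast
      rw [← add_mul, ← map_add]
      congr 2
      ring
    rw [Finset.sum_congr rfl hsplit, Finset.sum_add_distrib]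
    congr 1
    -- remains: Σ B = Σ G(shifted)
    have hG : ∑ k ∈ Finset.range (m+1),
        C (degFall lam 1 (k+1) * (((k+1:ℕ):ℝ) - m*lam) * Tc lam m (k+1)) * Fterm lam (m+1) (k+1)
        = ∑ k ∈ Finset.range (m+2),
            C (degFall lam 1 k * (((k:ℕ):ℝ) - m*lam) * Tc lam m k) * Fterm lam (m+1) k := by
      rw [Finset.sum_range_succ' (fun k => C (degFall lam 1 k * (((k:ℕ):ℝ) - m*lam) * Tc lam m k) * Fterm lam (m+1) k)]
      rw [degFall_zero, one_mul, Bfun_zero_coeff, map_zero, zero_mul, add_zero]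
    rw [hG, Finset.sum_range_succ
        (fun k => C (degFall lam 1 k * (((k:ℕ):ℝ) - m*lam) * Tc lam m k) * Fterm lam (m+1) k) (m+1),
      Tc_big lam m (m+1) (by omega), mul_zero, map_zero, zero_mul, add_zero]

end Aux
/-- Spivey-type recurrence for the fully degenerate Bell numbers
`Bel_{n,λ} = Σ_{k=0}^n {n brace k}_λ (1)_{k,λ}`:
`Bel_{n+m,λ} = Σ_{l=0}^n Σ_{k=0}^m (1)_{k,λ} {m brace k}_λ C(n,l) Bel_{l,λ}
F_{n−l,λ}^{(k)}(−λ, k−mλ)`, where `S n k = {n brace k}_λ` is defined by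
`(x)_{n,λ} = Σ_k S n k (x)_k`. -/
theorem stmt9 (lam : ℝ) (S : ℕ → ℕ → ℝ)
    (hS : ∀ (n : ℕ) (z : ℝ),
      degFall lam z n = ∑ k ∈ Finset.range (n + 1), S n k * fallF z k)
    (n m : ℕ) :
    (∑ j ∈ Finset.range (n + m + 1), S (n + m) j * degFall lam 1 j) =
      ∑ l ∈ Finset.range (n + 1), ∑ k ∈ Finset.range (m + 1),
        degFall lam 1 k * S m k * (n.choose l : ℝ) *
          (∑ j ∈ Finset.range (l + 1), S l j * degFall lam 1 j) *
          degFubiniOrd lam k (-lam) ((k : ℝ) - m * lam) (n - l) := by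
  classical
  have hSe : ∀ (a j : ℕ), j ≤ a → S a j = Tc lam a j := stirling_eq lam S hS
  have hFub : ∀ (k j : ℕ) (y : ℝ), degFubiniOrd lam k (-lam) y j
      = (j.factorial:ℝ) * PowerSeries.coeff j (((US lam)⁻¹)^k * degExpP lam y) :=
    fun _ _ _ => rfl
  have hLHS : ∑ j ∈ Finset.range (n+m+1), S (n+m) j * degFall lam 1 j = BelT lam (n+m) := by
    rw [BelT]
    apply Finset.sum_congr rfl
    intro j hj
    rw [Finset.mem_range] at hj
    rw [hSe _ _ (by omega)]
  have hmain := congrArg (PowerSeries.coeff n) (mainInd lam m)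
  rw [PowerSeries.coeff_mk, RHSser, map_sum] at hmain
  have hterm : ∀ k ∈ Finset.range (m+1),
      PowerSeries.coeff n (PowerSeries.C (degFall lam 1 k * Tc lam m k) * Fterm lam m k)
      = ∑ l ∈ Finset.range (n+1), (degFall lam 1 k * Tc lam m k) * ((BelT lam l / l.factorial) *
          PowerSeries.coeff (n-l) (((US lam)⁻¹)^k * degExpP lam ((k:ℝ) - m*lam))) := by
    intro k _
    rw [PowerSeries.coeff_C_mul, Fterm, mul_assoc (Bser lam), PowerSeries.coeff_mul,
      Finset.Nat.sum_antidiagonal_eq_sum_range_succ_mk, Finset.mul_sum]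
    apply Finset.sum_congr rfl
    intro l _
    rw [Bser, PowerSeries.coeff_mk]
  rw [Finset.sum_congr rfl hterm] at hmain
  have hfac : (n.factorial : ℝ) ≠ 0 := by positivity
  have key : BelT lam (n+m) = ∑ k ∈ Finset.range (m+1), ∑ l ∈ Finset.range (n+1),
      degFall lam 1 k * Tc lam m k * (n.choose l : ℝ) * BelT lam l *
        (((n-l).factorial:ℝ) * PowerSeries.coeff (n-l) (((US lam)⁻¹)^k * degExpP lam ((k:ℝ) - m*lam))) := by
    have h1 : BelT lam (n+m) = (n.factorial:ℝ) * (BelT lam (n+m) / n.factorial) := by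
      field_simp
    rw [h1, hmain, Finset.mul_sum]
    apply Finset.sum_congr rfl
    intro k _
    rw [Finset.mul_sum]
    apply Finset.sum_congr rfl
    intro l hl
    rw [Finset.mem_range] at hl
    have hfl : ((n.choose l : ℕ):ℝ) * (l.factorial:ℝ) * ((n-l).factorial:ℝ) = (n.factorial:ℝ) := by
      rw [← Nat.cast_mul, ← Nat.cast_mul, Nat.choose_mul_factorial_mul_factorial (by omega)]
    have hlf : (l.factorial:ℝ) ≠ 0 := by positivity
    field_simp
    linear_combination (- degFall lam 1 k * Tc lam m k * BelT lam l *
      PowerSeries.coeff (n-l) (((US lam)⁻¹)^k * degExpP lam ((k:ℝ) - m*lam))) * hfl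
  rw [hLHS, key, Finset.sum_comm]
  apply Finset.sum_congr rfl
  intro l hl
  apply Finset.sum_congr rfl
  intro k hk
  rw [Finset.mem_range] at hl hk
  have hBel : ∑ j ∈ Finset.range (l+1), S l j * degFall lam 1 j = BelT lam l := by
    rw [BelT]
    apply Finset.sum_congr rfl
    intro j hj
    rw [Finset.mem_range] at hj
    rw [hSe _ _ (by omega)]
  rw [hBel, hSe m k (by omega), hFub]
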